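/- Let A and B be free abelian groups, and let Q be the image of a homomorphism φ : A → B with kernel K. Then the kernel of the induced map ∧²A → ∧²B equals the subgroup A ∧ K (generated by elements a ∧ k with a ∈ A, k ∈ K), provided Q is a direct summand of B (equivalently, B/Q is torsion-free). -/

import Mathlib

open ExteriorAlgebra

/-- Let `φ : A → B` be a homomorphism of finitely generated free
`ℤ`-modules whose image is a direct summand of `B`, with kernel `K`.  Then the
kernel of the induced map `∧²A → ∧²B` is the subgroup `A ∧ K` generated by the
elements `a ∧ k` with `a ∈ A`, `k ∈ K`.  (The second exterior powers are realised
inside the exterior algebras, and the induced map is the algebra map of `φ`.) -/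
theorem kernel_wedge_square (A B : Type)
    [AddCommGroup A] [Module ℤ A] [Module.Free ℤ A] [Module.Finite ℤ A]
    [AddCommGroup B] [Module ℤ B] [Module.Free ℤ B] [Module.Finite ℤ B]
    (φ : A →ₗ[ℤ] B)
    (hsummand : ∃ q : Submodule ℤ B, IsCompl (LinearMap.range φ) q)
    (W2 : Submodule ℤ (ExteriorAlgebra ℤ A))
    (hW2 : W2 = Submodule.span ℤ
      {z : ExteriorAlgebra ℤ A | ∃ a a' : A, z = ι ℤ a * ι ℤ a'}) :
    W2 ⊓ LinearMap.ker (ExteriorAlgebra.map φ).toLinearMap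
      = Submodule.span ℤ {z : ExteriorAlgebra ℤ A |
          ∃ a k : A, k ∈ LinearMap.ker φ ∧ z = ι ℤ a * ι ℤ k} := by
  obtain ⟨q, hq⟩ := hsummand
  set Q : Submodule ℤ B := LinearMap.range φ with hQ
  -- a section of the surjection A → Q
  letI : Module ℤ ↥Q := Q.module
  obtain ⟨s, hs⟩ := Module.projective_lifting_property φ.rangeRestrict
    LinearMap.id φ.surjective_rangeRestrict
  set ψ : A →ₗ[ℤ] A := s ∘ₗ φ.rangeRestrict with hψdef
  have hφψ : ∀ a : A, φ (ψ a) = φ a := by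
    intro a
    have := congrArg (fun f => (f (φ.rangeRestrict a) : B)) hs
    simpa [hψdef] using this
  -- retraction g : B → A with g ∘ φ = ψ
  set g : B →ₗ[ℤ] A := s ∘ₗ (Q.projectionOnto q hq) with hgdef
  have hgφ : g ∘ₗ φ = ψ := by
    ext a
    have h1 : (Q.projectionOnto q hq) (φ a) = φ.rangeRestrict a := by
      have : φ a = ((φ.rangeRestrict a : ↥Q) : B) := rfl
      rw [this, Submodule.projectionOnto_apply_left]
    simp [hgdef, hψdef, h1]
  -- the target span
  set S : Submodule ℤ (ExteriorAlgebra ℤ A) := Submodule.span ℤ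
    {z : ExteriorAlgebra ℤ A | ∃ a k : A, k ∈ LinearMap.ker φ ∧ z = ι ℤ a * ι ℤ k} with hS
  have swap_mem : ∀ (k x : A), k ∈ LinearMap.ker φ → ι ℤ k * ι ℤ x ∈ S := by
    intro k x hk
    have h0 : ι ℤ k * ι ℤ x = -(ι ℤ x * ι ℤ k) := by
      rw [eq_neg_iff_add_eq_zero]
      exact ι_add_mul_swap (R := ℤ) k x
    rw [h0]
    exact S.neg_mem (Submodule.subset_span ⟨x, k, hk, rfl⟩)
  -- key: for z ∈ W2, z - map ψ z ∈ S
  have key : ∀ z ∈ W2, z - (ExteriorAlgebra.map ψ) z ∈ S := by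
    intro z hz
    have : W2 ≤ Submodule.comap
        (AddMonoidHom.id _ - (ExteriorAlgebra.map ψ).toAddMonoidHom).toIntLinearMap S := by
      rw [hW2, Submodule.span_le]
      rintro _ ⟨a, a', rfl⟩
      simp only [SetLike.mem_coe, Submodule.mem_comap, LinearMap.sub_apply,
        LinearMap.id_apply, AlgHom.toLinearMap_apply]
      change ι ℤ a * ι ℤ a' - (ExteriorAlgebra.map ψ) (ι ℤ a * ι ℤ a') ∈ S
      have hk : a - ψ a ∈ LinearMap.ker φ := by
        simp [LinearMap.mem_ker, map_sub, hφψ]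
      have hk' : a' - ψ a' ∈ LinearMap.ker φ := by
        simp [LinearMap.mem_ker, map_sub, hφψ]
      have expand : ι ℤ a * ι ℤ a' - (ExteriorAlgebra.map ψ) (ι ℤ a * ι ℤ a')
          = ι ℤ (ψ a) * ι ℤ (a' - ψ a') + (ι ℤ (a - ψ a) * ι ℤ (ψ a')
            + ι ℤ (a - ψ a) * ι ℤ (a' - ψ a')) := by
        simp only [map_mul, map_apply_ι, map_sub]
        noncomm_ring
      rw [expand]
      refine S.add_mem (Submodule.subset_span ⟨ψ a, _, hk', rfl⟩) (S.add_mem ?_ ?_)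
      · exact swap_mem _ _ hk
      · exact Submodule.subset_span ⟨a - ψ a, _, hk', rfl⟩
    have h2 := this hz
    simp only [Submodule.mem_comap, LinearMap.sub_apply, LinearMap.id_apply,
      AlgHom.toLinearMap_apply] at h2
    exact h2
  apply le_antisymm
  · rintro z ⟨hz1, hz2⟩
    have hz2' : (ExteriorAlgebra.map φ) z = 0 := hz2
    have hψz : (ExteriorAlgebra.map ψ) z = 0 := by
      have : (ExteriorAlgebra.map ψ) z = (ExteriorAlgebra.map g) ((ExteriorAlgebra.map φ) z) := by
        rw [← hgφ, ← map_comp_map]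
        rfl
      rw [this, hz2', map_zero]
    have := key z hz1
    rwa [hψz, sub_zero] at this
  · rw [hS, Submodule.span_le]
    rintro _ ⟨a, k, hk, rfl⟩
    constructor
    · rw [hW2]; exact Submodule.subset_span ⟨a, k, rfl⟩
    · simp only [SetLike.mem_coe, LinearMap.mem_ker, AlgHom.toLinearMap_apply, map_mul,
        map_apply_ι]
      change (ExteriorAlgebra.map φ) (ι ℤ a * ι ℤ k) = 0
      rw [map_mul, map_apply_ι, map_apply_ι, LinearMap.mem_ker.mp hk, map_zero, mul_zero]
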